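/- Let 0 < α ≤ 1 and let X be a random variable with the Pareto distribution with tail index α. Then there exists a constant C > 0 such that for every b ≥ e: E[ |X·1{X ≤ b} − E[X·1{X ≤ b}]|³ ] ≤ C · b^{α/2} · ( Var(X·1{X ≤ b}) )^{3/2}. (Consequently, for i.i.d. copies X_1, …, X_n and truncation level b_n, the Lyapunov ratio Σ_{k=1}^n E|X_k(b_n) − μ_n|³ / (n·Var(X_1(b_n)))^{3/2} is bounded by C·(b_n^α/n)^{1/2}.) -/

import Mathlib

open MeasureTheory ProbabilityTheory Real Set

/-- `trunc b x = x · 1{x ≤ b}` : truncation of a value at level `b`. -/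
noncomputable def trunc (b x : ℝ) : ℝ := if x ≤ b then x else 0

/-- `X` is a Pareto random variable with tail index `α`:
`X` is measurable and `P(X ≤ x) = 1 - x^{-α}` for all `x ≥ 1`. -/
def IsParetoRV {Ω : Type*} [MeasurableSpace Ω] (P : Measure Ω) (X : Ω → ℝ)
    (α : ℝ) : Prop :=
  Measurable X ∧ ∀ x : ℝ, 1 ≤ x → P {ω | X ω ≤ x} = ENNReal.ofReal (1 - x ^ (-α))

/-- The small constant in the variance lower bound. -/
noncomputable def lyapc (α : ℝ) : ℝ :=
  min (((4/3 : ℝ) ^ α - 1) / 16)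
      ((1/2 - 9/(8 * Real.exp 1)) ^ 2 * (1 - (9/8 : ℝ) ^ (-α)))

lemma lyapc_pos {α : ℝ} (hα0 : 0 < α) : 0 < lyapc α := by
  have h1 : (1:ℝ) < (4/3 : ℝ) ^ α :=
    (Real.one_lt_rpow_iff_of_pos (by norm_num)).mpr (by norm_num [hα0])
  have h2 : ((9:ℝ)/8) ^ (-α) < 1 :=
    Real.rpow_lt_one_of_one_lt_of_neg (by norm_num) (by linarith)
  have h3 : (0:ℝ) < 1/2 - 9/(8 * Real.exp 1) := by
    have := Real.exp_one_gt_d9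
    have hepos : (0:ℝ) < Real.exp 1 := Real.exp_pos 1
    rw [sub_pos, div_lt_iff₀ (by positivity)]
    nlinarith
  exact lt_min (by linarith) (mul_pos (by positivity) (by linarith))

lemma trunc_measurable (b : ℝ) : Measurable (trunc b) := by
  unfold trunc
  exact Measurable.ite (measurableSet_le measurable_id measurable_const)
    measurable_id measurable_const

/-- The key single-truncation-level estimates. -/
lemma key_bound {Ω : Type*} [MeasurableSpace Ω] (P : Measure Ω) [IsProbabilityMeasure P]
    {α : ℝ} (hα0 : 0 < α) (hα1 : α ≤ 1) {X : Ω → ℝ} (hX : Measurable X)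
    (hcdf : ∀ x : ℝ, 1 ≤ x → P {ω | X ω ≤ x} = ENNReal.ofReal (1 - x ^ (-α)))
    {b : ℝ} (hb : Real.exp 1 ≤ b) :
    lyapc α * b ^ ((2:ℝ) - α) ≤ variance (fun ω => trunc b (X ω)) P ∧
    ∫ ω, |trunc b (X ω) - ∫ ω', trunc b (X ω') ∂P| ^ 3 ∂P ≤
      (lyapc α) ^ (-(1:ℝ)/2) * b ^ (α / 2) *
        (variance (fun ω => trunc b (X ω)) P) ^ ((3:ℝ)/2) := by
  have he : (2.7182818283 : ℝ) < Real.exp 1 := Real.exp_one_gt_d9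
  have hb2 : (2.7182818283 : ℝ) ≤ b := le_trans he.le hb
  have hb0 : (0:ℝ) < b := by linarith
  have hb1 : (1:ℝ) ≤ b := by linarith
  set Y : Ω → ℝ := fun ω => trunc b (X ω) with hYdef
  have hYeq : ∀ ω, Y ω = if X ω ≤ b then X ω else 0 := fun ω => rfl
  have hYmeas : Measurable Y := (trunc_measurable b).comp hX
  -- a.s. 1 < X
  have hXae : ∀ᵐ ω ∂P, 1 < X ω := by
    have h0 : P {ω | X ω ≤ 1} = 0 := by
      rw [hcdf 1 le_rfl]; simp
    have : {ω | ¬ 1 < X ω} = {ω | X ω ≤ 1} := by ext ω; simp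
    rw [ae_iff, this]; exact h0
  have hYb : ∀ᵐ ω ∂P, 0 ≤ Y ω ∧ Y ω ≤ b := by
    filter_upwards [hXae] with ω h1
    rw [hYeq]
    split_ifs with h
    · exact ⟨by linarith, h⟩
    · exact ⟨le_rfl, hb0.le⟩
  have hmem : MemLp Y 2 P := by
    refine (memLp_top_of_bound hYmeas.aestronglyMeasurable b ?_).mono_exponent le_top
    filter_upwards [hYb] with ω h
    rw [Real.norm_eq_abs, abs_le]; exact ⟨by linarith [h.1], h.2⟩
  have hint : Integrable Y P := hmem.integrable one_le_two
  set μ : ℝ := ∫ ω, Y ω ∂P with hμdef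
  have hμ0 : 0 ≤ μ := integral_nonneg_of_ae ((hYb.mono) fun ω h => h.1)
  have hμb : μ ≤ b := by
    calc μ ≤ ∫ _, b ∂P := integral_mono_ae hint (integrable_const b) ((hYb.mono) fun ω h => h.2)
    _ = b := by simp
  set V : ℝ := variance Y P with hVdef
  have hVeq : V = ∫ ω, (Y ω - μ) ^ 2 ∂P := by
    rw [hVdef, variance_eq_integral hYmeas.aemeasurable]
  have hint2 : Integrable (fun ω => (Y ω - μ) ^ 2) P := (hmem.sub (memLp_const μ)).integrable_sq
  -- CDF for preimages
  have hPIic : ∀ x : ℝ, 1 ≤ x → P (X ⁻¹' Iic x) = ENNReal.ofReal (1 - x ^ (-α)) :=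
    fun x hx => hcdf x hx
  -- variance lower bound
  have hVlow : lyapc α * b ^ ((2:ℝ) - α) ≤ V := by
    rcases le_or_gt μ (b/2) with hcase | hcase
    · -- use mass on (3b/4, b]
      set A := X ⁻¹' Ioc (3*b/4) b with hAdef
      have hAm : MeasurableSet A := hX measurableSet_Ioc
      have hpt : ∀ ω, A.indicator (fun _ => (b/4)^2) ω ≤ (Y ω - μ)^2 := by
        intro ω
        by_cases hω : ω ∈ A
        · rw [Set.indicator_of_mem hω]
          have h1 : 3*b/4 < X ω := hω.1
          have h2 : X ω ≤ b := hω.2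
          have hYω : Y ω = X ω := by rw [hYeq, if_pos h2]
          have hd : b/4 ≤ Y ω - μ := by rw [hYω]; linarith
          exact pow_le_pow_left₀ (by positivity) hd 2
        · rw [Set.indicator_of_notMem hω]; positivity
      have hPA : (P A).toReal = (3*b/4) ^ (-α) - b ^ (-α) := by
        have h34 : (1:ℝ) ≤ 3*b/4 := by linarith
        have hsub : X ⁻¹' Iic (3*b/4) ⊆ X ⁻¹' Iic b :=
          preimage_mono (Iic_subset_Iic.mpr (by linarith))
        have hA : A = X ⁻¹' Iic b \ X ⁻¹' Iic (3*b/4) := by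
          rw [hAdef, ← Set.preimage_diff, Iic_sdiff_Iic]
        have hle1 : (3*b/4 : ℝ) ^ (-α) ≤ 1 :=
          Real.rpow_le_one_of_one_le_of_nonpos h34 (by linarith)
        have hmono : b ^ (-α) ≤ (3*b/4 : ℝ) ^ (-α) :=
          Real.rpow_le_rpow_of_nonpos (by linarith) (by linarith) (by linarith)
        rw [hA, measure_diff hsub ((hX measurableSet_Iic).nullMeasurableSet)
            (measure_ne_top P _), hPIic b hb1, hPIic (3*b/4) h34,
            ← ENNReal.ofReal_sub _ (by linarith), ENNReal.toReal_ofReal (by linarith)]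
        ring
      have hVA : (b/4)^2 * ((3*b/4) ^ (-α) - b ^ (-α)) ≤ V := by
        have := integral_mono ((integrable_const ((b/4)^2)).indicator hAm) hint2 hpt
        rw [integral_indicator_const _ hAm, smul_eq_mul, measureReal_def, hPA, ← hVeq] at this
        linarith
      have e1 : (3*b/4 : ℝ) ^ (-α) = (4/3 : ℝ) ^ α * b ^ (-α) := by
        have h34 : (3*b/4 : ℝ) = (3/4) * b := by ring
        rw [h34, Real.mul_rpow (by norm_num) hb0.le]
        congr 1
        rw [Real.rpow_neg (by norm_num : (0:ℝ) ≤ 3/4), show (3/4 : ℝ) = ((4:ℝ)/3)⁻¹ by norm_num,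
          Real.inv_rpow (by norm_num), inv_inv]
      have e2 : b ^ ((2:ℝ) - α) = b^2 * b ^ (-α) := by
        rw [show (2:ℝ) - α = 2 + (-α) by ring, Real.rpow_add hb0, Real.rpow_two]
      calc lyapc α * b ^ ((2:ℝ) - α)
          ≤ ((4/3 : ℝ) ^ α - 1) / 16 * b ^ ((2:ℝ) - α) :=
            mul_le_mul_of_nonneg_right (min_le_left _ _) (Real.rpow_nonneg hb0.le _)
        _ = (b/4)^2 * ((3*b/4) ^ (-α) - b ^ (-α)) := by rw [e1, e2]; ring
        _ ≤ V := hVA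
    · -- use mass on [1, 9/8]
      set A := X ⁻¹' Iic (9/8) with hAdef
      have hAm : MeasurableSet A := hX measurableSet_Iic
      have hpt : ∀ ω, A.indicator (fun _ => (b/2 - 9/8)^2) ω ≤ (Y ω - μ)^2 := by
        intro ω
        by_cases hω : ω ∈ A
        · rw [Set.indicator_of_mem hω]
          have h2 : X ω ≤ 9/8 := hω
          have hYω : Y ω = X ω := by rw [hYeq, if_pos (by linarith)]
          have hd : b/2 - 9/8 ≤ μ - Y ω := by rw [hYω]; linarith
          have : (b/2 - 9/8)^2 ≤ (μ - Y ω)^2 := pow_le_pow_left₀ (by linarith) hd 2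
          calc (b/2 - 9/8)^2 ≤ (μ - Y ω)^2 := this
          _ = (Y ω - μ)^2 := by ring
        · rw [Set.indicator_of_notMem hω]; positivity
      have hle1 : ((9:ℝ)/8) ^ (-α) ≤ 1 :=
        Real.rpow_le_one_of_one_le_of_nonpos (by norm_num) (by linarith)
      have hPA : (P A).toReal = 1 - (9/8 : ℝ) ^ (-α) := by
        rw [hAdef, hPIic (9/8) (by norm_num), ENNReal.toReal_ofReal (by linarith)]
      have hVA : (b/2 - 9/8)^2 * (1 - (9/8 : ℝ) ^ (-α)) ≤ V := by
        have := integral_mono ((integrable_const ((b/2 - 9/8)^2)).indicator hAm) hint2 hpt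
        rwa [integral_indicator_const _ hAm, smul_eq_mul, measureReal_def, hPA, ← hVeq, mul_comm] at this
      have e3 : b ^ ((2:ℝ) - α) ≤ b^2 := by
        calc b ^ ((2:ℝ) - α) ≤ b ^ (2:ℝ) :=
          Real.rpow_le_rpow_of_exponent_le hb1 (by linarith)
        _ = b^2 := Real.rpow_two b
      have hκ : (1/2 - 9/(8 * Real.exp 1)) * b ≤ b/2 - 9/8 := by
        have hepos : (0:ℝ) < Real.exp 1 := Real.exp_pos 1
        have : 9/8 ≤ 9/(8 * Real.exp 1) * b := by
          rw [div_mul_eq_mul_div, le_div_iff₀ (by positivity)]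
          nlinarith
        linarith [this]
      have hκ0 : (0:ℝ) ≤ 1/2 - 9/(8 * Real.exp 1) := by
        rw [sub_nonneg, div_le_iff₀ (by positivity)]
        nlinarith
      calc lyapc α * b ^ ((2:ℝ) - α)
          ≤ (1/2 - 9/(8 * Real.exp 1))^2 * (1 - (9/8 : ℝ) ^ (-α)) * b ^ ((2:ℝ) - α) :=
            mul_le_mul_of_nonneg_right (min_le_right _ _) (Real.rpow_nonneg hb0.le _)
        _ ≤ (1/2 - 9/(8 * Real.exp 1))^2 * (1 - (9/8 : ℝ) ^ (-α)) * b^2 := by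
            exact mul_le_mul_of_nonneg_left e3 (mul_nonneg (sq_nonneg _) (by linarith))
        _ = ((1/2 - 9/(8 * Real.exp 1)) * b)^2 * (1 - (9/8 : ℝ) ^ (-α)) := by ring
        _ ≤ (b/2 - 9/8)^2 * (1 - (9/8 : ℝ) ^ (-α)) := by
            apply mul_le_mul_of_nonneg_right _ (by linarith)
            exact pow_le_pow_left₀ (by positivity) hκ 2
        _ ≤ V := hVA
  refine ⟨hVlow, ?_⟩
  -- third absolute central moment ≤ b * V
  have habs : ∀ᵐ ω ∂P, |Y ω - μ| ≤ b := by
    filter_upwards [hYb] with ω h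
    rw [abs_le]; constructor <;> [linarith [h.1]; linarith [h.2]]
  have hint3 : Integrable (fun ω => |Y ω - μ| ^ 3) P := by
    apply Integrable.mono' (integrable_const (b^3))
      ((hYmeas.sub_const μ).abs.pow_const 3).aestronglyMeasurable
    filter_upwards [habs] with ω h
    rw [Real.norm_eq_abs, abs_of_nonneg (by positivity)]
    exact pow_le_pow_left₀ (abs_nonneg _) h 3
  have hI3V : ∫ ω, |Y ω - μ| ^ 3 ∂P ≤ b * V := by
    rw [hVeq, ← integral_const_mul]
    apply integral_mono_ae hint3 (hint2.const_mul b)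
    filter_upwards [habs] with ω h
    calc |Y ω - μ| ^ 3 = |Y ω - μ| * |Y ω - μ|^2 := by ring
    _ ≤ b * |Y ω - μ|^2 := mul_le_mul_of_nonneg_right h (sq_nonneg _)
    _ = b * (Y ω - μ)^2 := by rw [sq_abs]
  -- combine
  have hc := lyapc_pos hα0
  have hVpos : 0 < V := lt_of_lt_of_le (by positivity) hVlow
  have hfin : b * V ≤ (lyapc α) ^ (-(1:ℝ)/2) * b ^ (α/2) * V ^ ((3:ℝ)/2) := by
    have hV12 : (lyapc α) ^ ((1:ℝ)/2) * b ^ (1 - α/2) ≤ V ^ ((1:ℝ)/2) := by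
      have := Real.rpow_le_rpow (by positivity) hVlow (le_of_lt one_half_pos)
      calc (lyapc α) ^ ((1:ℝ)/2) * b ^ (1 - α/2)
          = (lyapc α * b ^ ((2:ℝ) - α)) ^ ((1:ℝ)/2) := by
            rw [Real.mul_rpow hc.le (Real.rpow_nonneg hb0.le _), ← Real.rpow_mul hb0.le,
              show ((2:ℝ) - α) * (1/2) = 1 - α/2 by ring]
        _ ≤ V ^ ((1:ℝ)/2) := this
    have h32 : V ^ ((3:ℝ)/2) = V * V ^ ((1:ℝ)/2) := by
      rw [show (3:ℝ)/2 = 1 + 1/2 by norm_num, Real.rpow_add hVpos, Real.rpow_one]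
    rw [h32]
    have key : b ≤ (lyapc α) ^ (-(1:ℝ)/2) * b ^ (α/2) * V ^ ((1:ℝ)/2) := by
      calc b = (lyapc α) ^ (-(1:ℝ)/2) * b ^ (α/2) * ((lyapc α) ^ ((1:ℝ)/2) * b ^ (1 - α/2)) := by
            rw [show (lyapc α) ^ (-(1:ℝ)/2) * b ^ (α/2) * ((lyapc α) ^ ((1:ℝ)/2) * b ^ (1 - α/2))
              = ((lyapc α) ^ (-(1:ℝ)/2) * (lyapc α) ^ ((1:ℝ)/2)) * (b ^ (α/2) * b ^ (1 - α/2)) by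
                ring, ← Real.rpow_add hc, ← Real.rpow_add hb0]
            norm_num
        _ ≤ (lyapc α) ^ (-(1:ℝ)/2) * b ^ (α/2) * V ^ ((1:ℝ)/2) :=
            mul_le_mul_of_nonneg_left hV12 (by positivity)
    calc b * V ≤ ((lyapc α) ^ (-(1:ℝ)/2) * b ^ (α/2) * V ^ ((1:ℝ)/2)) * V :=
          mul_le_mul_of_nonneg_right key hVpos.le
    _ = (lyapc α) ^ (-(1:ℝ)/2) * b ^ (α/2) * (V * V ^ ((1:ℝ)/2)) := by ring
  exact le_trans hI3V hfin

lemma pareto_map_eq {Ω : Type*} [MeasurableSpace Ω] (P : Measure Ω) [IsProbabilityMeasure P]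
    {α : ℝ} (hα0 : 0 < α) {X X' : Ω → ℝ} (hX : Measurable X) (hX' : Measurable X')
    (h1 : ∀ x : ℝ, 1 ≤ x → P {ω | X ω ≤ x} = ENNReal.ofReal (1 - x ^ (-α)))
    (h2 : ∀ x : ℝ, 1 ≤ x → P {ω | X' ω ≤ x} = ENNReal.ofReal (1 - x ^ (-α))) :
    Measure.map X P = Measure.map X' P := by
  have hz : ∀ (Z : Ω → ℝ), Measurable Z →
      (∀ x : ℝ, 1 ≤ x → P {ω | Z ω ≤ x} = ENNReal.ofReal (1 - x ^ (-α))) →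
      ∀ a : ℝ, Measure.map Z P (Iic a) = if 1 ≤ a then ENNReal.ofReal (1 - a ^ (-α)) else 0 := by
    intro Z hZ hcdf a
    rw [Measure.map_apply hZ measurableSet_Iic]
    split_ifs with ha
    · exact hcdf a ha
    · refine le_antisymm ?_ zero_le
      calc P (Z ⁻¹' Iic a) ≤ P (Z ⁻¹' Iic 1) :=
            measure_mono (preimage_mono (Iic_subset_Iic.mpr (by linarith)))
        _ = 0 := by rw [show P (Z ⁻¹' Iic 1) = P {ω | Z ω ≤ 1} from rfl, hcdf 1 le_rfl]; simp
  have : IsProbabilityMeasure (Measure.map X P) := Measure.isProbabilityMeasure_map hX.aemeasurable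
  refine Measure.ext_of_Iic _ _ (fun a => ?_)
  rw [hz X hX h1 a, hz X' hX' h2 a]

theorem lyapunov_third_moment_bound {Ω : Type*} [MeasurableSpace Ω]
    (P : Measure Ω) [IsProbabilityMeasure P]
    (α : ℝ) (hα0 : 0 < α) (hα1 : α ≤ 1)
    (X : ℕ → Ω → ℝ)
    (hiid : iIndepFun X P)
    (hPar : ∀ k, IsParetoRV P (X k) α) :
    ∃ C : ℝ, 0 < C ∧
      (∀ b : ℝ, Real.exp 1 ≤ b →
        ∫ ω, |trunc b (X 0 ω) - ∫ ω', trunc b (X 0 ω') ∂P| ^ 3 ∂P ≤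
          C * b ^ (α / 2) *
            (variance (fun ω => trunc b (X 0 ω)) P) ^ ((3 : ℝ) / 2)) ∧
      (∀ (b : ℕ → ℝ) (n : ℕ), 1 ≤ n → Real.exp 1 ≤ b n →
        (∑ k ∈ Finset.range n,
            ∫ ω, |trunc (b n) (X k ω) - ∫ ω', trunc (b n) (X 0 ω') ∂P| ^ 3 ∂P) /
          ((n : ℝ) * variance (fun ω => trunc (b n) (X 0 ω)) P) ^ ((3 : ℝ) / 2) ≤
          C * ((b n) ^ α / n) ^ ((1 : ℝ) / 2)) := by
  set C : ℝ := (lyapc α) ^ (-(1:ℝ)/2) with hCdef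
  have hc := lyapc_pos hα0
  have hCpos : 0 < C := Real.rpow_pos_of_pos hc _
  have hkey := fun (b : ℝ) (hb : Real.exp 1 ≤ b) =>
    key_bound P hα0 hα1 (hPar 0).1 (hPar 0).2 hb
  refine ⟨C, hCpos, fun b hb => (hkey b hb).2, ?_⟩
  intro b n hn hb
  set bn := b n with hbn
  have hbkey := hkey bn hb
  set Y : Ω → ℝ := fun ω => trunc bn (X 0 ω) with hYdef
  set μ : ℝ := ∫ ω', trunc bn (X 0 ω') ∂P with hμdef
  set V : ℝ := variance Y P with hVdef
  set I : ℝ := ∫ ω, |trunc bn (X 0 ω) - μ| ^ 3 ∂P with hIdef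
  have he : (2.7182818283 : ℝ) < Real.exp 1 := Real.exp_one_gt_d9
  have hb0 : (0:ℝ) < bn := by linarith [le_trans he.le hb]
  have hVpos : 0 < V := lt_of_lt_of_le (by positivity) hbkey.1
  have hI0 : 0 ≤ I := integral_nonneg (fun ω => by positivity)
  have hIb : I ≤ C * bn ^ (α/2) * V ^ ((3:ℝ)/2) := hbkey.2
  -- each term in the sum equals I
  have hterm : ∀ k, (∫ ω, |trunc bn (X k ω) - μ| ^ 3 ∂P) = I := by
    intro k
    have hg : Measurable (fun x : ℝ => |trunc bn x - μ| ^ 3) :=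
      ((trunc_measurable bn).sub_const μ).abs.pow_const 3
    have hmap : Measure.map (X k) P = Measure.map (X 0) P :=
      pareto_map_eq P hα0 (hPar k).1 (hPar 0).1 (hPar k).2 (hPar 0).2
    rw [hIdef, ← integral_map (hPar k).1.aemeasurable hg.aestronglyMeasurable, hmap,
      integral_map (hPar 0).1.aemeasurable hg.aestronglyMeasurable]
  have hsum : (∑ k ∈ Finset.range n,
      ∫ ω, |trunc bn (X k ω) - μ| ^ 3 ∂P) = n * I := by
    rw [Finset.sum_congr rfl (fun k _ => hterm k), Finset.sum_const, Finset.card_range,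
      nsmul_eq_mul]
  rw [hsum]
  -- arithmetic
  have hn1 : (1:ℝ) ≤ (n:ℝ) := by exact_mod_cast hn
  have hn0 : (0:ℝ) < (n:ℝ) := by linarith
  have hden : (0:ℝ) < ((n:ℝ) * V) ^ ((3:ℝ)/2) := Real.rpow_pos_of_pos (by positivity) _
  rw [div_le_iff₀ hden]
  have hexp : C * (bn ^ α / (n:ℝ)) ^ ((1:ℝ)/2) * ((n:ℝ) * V) ^ ((3:ℝ)/2)
      = (C * bn ^ (α/2) * V ^ ((3:ℝ)/2)) * (n:ℝ) := by
    rw [Real.mul_rpow hn0.le hVpos.le,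
      Real.div_rpow (Real.rpow_nonneg hb0.le _) hn0.le,
      ← Real.rpow_mul hb0.le, show α * (1/2) = α/2 by ring,
      show ((3:ℝ)/2) = 1/2 + 1 by norm_num, Real.rpow_add hn0, Real.rpow_one]
    field_simp
  rw [hexp]
  calc (n:ℝ) * I ≤ (n:ℝ) * (C * bn ^ (α/2) * V ^ ((3:ℝ)/2)) :=
        mul_le_mul_of_nonneg_left hIb hn0.le
  _ = (C * bn ^ (α/2) * V ^ ((3:ℝ)/2)) * (n:ℝ) := by ring
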